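/- (Brezis–Gallouët-type bound via Fourier series) Let v be a zero-mean function on the 2-torus with ‖∇v‖_{L²} ≤ 1 and ‖Δv‖_{L²} < ∞. Then Σ_{k≠0} |v̂_k| ≤ C (1 + (log max(‖Δv‖_{L²}, 2))^{1/2}) for an absolute constant C. -/

import Mathlib

open Real Complex

/-- `|k| = √(k₁² + k₂²)` for a lattice point `k ∈ ℤ²`. -/
noncomputable def latticeMag (k : ℤ × ℤ) : ℝ :=
  Real.sqrt ((k.1 : ℝ) ^ 2 + (k.2 : ℝ) ^ 2)


lemma latticeMag_nonneg (k : ℤ × ℤ) : 0 ≤ latticeMag k := Real.sqrt_nonneg _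

lemma latticeMag_sq (k : ℤ × ℤ) : latticeMag k ^ 2 = (k.1 : ℝ) ^ 2 + (k.2 : ℝ) ^ 2 :=
  Real.sq_sqrt (by positivity)

lemma abs_fst_le (k : ℤ × ℤ) : |(k.1 : ℝ)| ≤ latticeMag k := by
  rw [← Real.sqrt_sq_eq_abs]
  exact Real.sqrt_le_sqrt (by nlinarith [sq_nonneg ((k.2:ℝ))])

lemma abs_snd_le (k : ℤ × ℤ) : |(k.2 : ℝ)| ≤ latticeMag k := by
  rw [← Real.sqrt_sq_eq_abs]
  exact Real.sqrt_le_sqrt (by nlinarith [sq_nonneg ((k.1:ℝ))])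

lemma one_le_latticeMag {k : ℤ × ℤ} (hk : k ≠ 0) : 1 ≤ latticeMag k := by
  rcases ne_or_eq k.1 0 with h | h1
  · calc (1:ℝ) ≤ |(k.1 : ℝ)| := by
          rw [← Int.cast_abs]; exact_mod_cast Int.one_le_abs h
      _ ≤ latticeMag k := abs_fst_le k
  · have h2 : k.2 ≠ 0 := by
      intro h2; exact hk (Prod.ext h1 h2)
    calc (1:ℝ) ≤ |(k.2 : ℝ)| := by
          rw [← Int.cast_abs]; exact_mod_cast Int.one_le_abs h2
      _ ≤ latticeMag k := abs_snd_le k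

noncomputable def Fq (k : ℤ × ℤ) : ℝ := if k = 0 then 0 else (latticeMag k ^ 2)⁻¹

lemma Fq_nonneg (k : ℤ × ℤ) : 0 ≤ Fq k := by
  unfold Fq; split_ifs with h
  · exact le_refl 0
  · positivity

/-- the centered box of radius `n` in `ℤ²` -/
noncomputable def box (n : ℕ) : Finset (ℤ × ℤ) := (Finset.Icc (-(n:ℤ)) n) ×ˢ (Finset.Icc (-(n:ℤ)) n)

lemma mem_box {n : ℕ} {k : ℤ × ℤ} : k ∈ box n ↔ |k.1| ≤ (n:ℤ) ∧ |k.2| ≤ (n:ℤ) := by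
  simp [box, Finset.mem_product, Finset.mem_Icc, abs_le]

lemma box_mono {n : ℕ} : box n ⊆ box (n + 1) := by
  intro k hk
  rw [mem_box] at hk ⊢
  push_cast
  omega

lemma box_card (n : ℕ) : (box n).card = (2 * n + 1) ^ 2 := by
  rw [box, Finset.card_product, Int.card_Icc]
  have : ((n:ℤ) + 1 - -(n:ℤ)).toNat = 2 * n + 1 := by omega
  rw [this, sq]

noncomputable def harm (n : ℕ) : ℝ := ∑ i ∈ Finset.range n, ((i : ℝ) + 1)⁻¹

lemma harm_nonneg (n : ℕ) : 0 ≤ harm n := by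
  unfold harm; positivity

lemma harm_le (n : ℕ) : harm n ≤ 1 + Real.log n := by
  have h1 : harm n = ((harmonic n : ℚ) : ℝ) := by
    unfold harm harmonic
    push_cast
    exact Finset.sum_congr rfl fun i _ => by rw [add_comm]
  rw [h1]
  exact harmonic_le_one_add_log n

lemma sum_Fq_le (n : ℕ) : ∑ k ∈ box n, Fq k ≤ 8 * harm n := by
  induction n with
  | zero =>
    have : ∀ k ∈ box 0, Fq k = 0 := by
      intro k hk
      rw [mem_box] at hk
      have : k = 0 := by
        have e1 : k.1 = 0 := abs_eq_zero.mp (le_antisymm (by exact_mod_cast hk.1) (abs_nonneg _))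
        have e2 : k.2 = 0 := abs_eq_zero.mp (le_antisymm (by exact_mod_cast hk.2) (abs_nonneg _))
        exact Prod.ext e1 e2
      simp [Fq, this]
    rw [Finset.sum_eq_zero this]
    simp [harm]
  | succ n ih =>
    rw [← Finset.sum_sdiff (box_mono (n := n))]
    have hcard : (box (n+1) \ box n).card = 8 * n + 8 := by
      rw [Finset.card_sdiff_of_subset (box_mono (n := n)), box_card, box_card]
      have h1 : (2 * (n+1) + 1)^2 = (2*n+1)^2 + (8*n+8) := by ring
      omega
    have hbound : ∀ k ∈ box (n+1) \ box n, Fq k ≤ (((n:ℝ) + 1) ^ 2)⁻¹ := by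
      intro k hk
      rw [Finset.mem_sdiff] at hk
      obtain ⟨hk1, hk2⟩ := hk
      rw [mem_box] at hk2
      push_neg at hk2
      have habs : ((n:ℝ) + 1) ≤ latticeMag k := by
        rcases lt_or_ge (n:ℤ) |k.1| with h | h
        · calc ((n:ℝ) + 1) ≤ |(k.1:ℝ)| := by rw [← Int.cast_abs]; exact_mod_cast h
            _ ≤ _ := abs_fst_le k
        · have h2 : (n:ℤ) < |k.2| := by tauto
          calc ((n:ℝ) + 1) ≤ |(k.2:ℝ)| := by rw [← Int.cast_abs]; exact_mod_cast h2
            _ ≤ _ := abs_snd_le k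
      have hk0 : k ≠ 0 := by
        intro h; subst h
        have hl0 : latticeMag (0 : ℤ × ℤ) = 0 := by simp [latticeMag]
        rw [hl0] at habs
        have : (0:ℝ) ≤ (n:ℝ) := Nat.cast_nonneg n
        linarith
      rw [Fq, if_neg hk0]
      apply inv_anti₀ (by positivity)
      have h0 : (0:ℝ) ≤ (n:ℝ) + 1 := by positivity
      nlinarith [habs]
    calc ∑ k ∈ box (n+1) \ box n, Fq k + ∑ k ∈ box n, Fq k
        ≤ (box (n+1) \ box n).card • (((n:ℝ) + 1) ^ 2)⁻¹ + 8 * harm n := by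
          exact add_le_add (Finset.sum_le_card_nsmul _ _ _ hbound) ih
      _ = (8*(n:ℝ)+8) * (((n:ℝ) + 1) ^ 2)⁻¹ + 8 * harm n := by
          rw [hcard]; push_cast [nsmul_eq_mul]; ring
      _ = 8 * harm (n+1) := by
          have hne : ((n:ℝ) + 1) ≠ 0 := by positivity
          rw [show harm (n+1) = harm n + ((n:ℝ)+1)⁻¹ from by
            rw [harm, Finset.sum_range_succ, ← harm]]
          field_simp
          ring

noncomputable def hfun (a : ℤ) : ℝ := (1 + |(a : ℝ)|) ^ (-(3/2) : ℝ)

lemma hfun_pos (a : ℤ) : 0 < hfun a :=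
  Real.rpow_pos_of_pos (by positivity) _

lemma hfun_summable : Summable hfun := by
  rw [summable_int_iff_summable_nat_and_neg]
  constructor <;>
  · apply Summable.congr ((Real.summable_one_div_nat_add_rpow 1 (3/2)).mpr (by norm_num))
    intro n
    have h1 : |(n:ℝ) + 1| = 1 + (n:ℝ) := by
      rw [abs_of_pos (by positivity)]; ring
    simp only [hfun]
    push_cast
    rw [h1, Real.rpow_neg (by positivity), one_div]
    simp [_root_.abs_of_nonneg (show (0:ℝ) ≤ (n:ℝ) from Nat.cast_nonneg n)]

noncomputable def gg (k : ℤ × ℤ) : ℝ := (8:ℝ) ^ ((3:ℝ)/2) * (hfun k.1 * hfun k.2)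

lemma gg_nonneg (k : ℤ × ℤ) : 0 ≤ gg k := by
  have := hfun_pos k.1; have := hfun_pos k.2
  unfold gg; positivity

lemma gg_summable : Summable gg :=
  (hfun_summable.mul_of_nonneg hfun_summable (fun a => (hfun_pos a).le)
    (fun a => (hfun_pos a).le)).mul_left _

/-- Cauchy–Schwarz for tsums of nonnegative reals. -/
lemma tsum_mul_le_sqrt {ι : Type*} (f g : ι → ℝ) (hf0 : ∀ i, 0 ≤ f i) (hg0 : ∀ i, 0 ≤ g i)
    (hf : Summable (fun i => f i ^ 2)) (hg : Summable (fun i => g i ^ 2)) :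
    ∑' i, f i * g i ≤ Real.sqrt (∑' i, f i ^ 2) * Real.sqrt (∑' i, g i ^ 2) := by
  have hsum : Summable (fun i => f i * g i) := by
    apply Summable.of_nonneg_of_le (fun i => mul_nonneg (hf0 i) (hg0 i))
      (fun i => ?_) ((hf.add hg).div_const 2)
    nlinarith [sq_nonneg (f i - g i)]
  apply Summable.tsum_le_of_sum_le hsum
  intro s
  calc ∑ i ∈ s, f i * g i ≤ Real.sqrt (∑ i ∈ s, f i ^ 2) * Real.sqrt (∑ i ∈ s, g i ^ 2) :=
        Real.sum_mul_le_sqrt_mul_sqrt s f g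
    _ ≤ _ := by
        apply mul_le_mul
        · exact Real.sqrt_le_sqrt (Summable.sum_le_tsum s (fun i _ => sq_nonneg _) hf)
        · exact Real.sqrt_le_sqrt (Summable.sum_le_tsum s (fun i _ => sq_nonneg _) hg)
        · exact Real.sqrt_nonneg _
        · exact Real.sqrt_nonneg _

lemma cube_bound {k : ℤ × ℤ} (hk : k ≠ 0) : (latticeMag k ^ 3)⁻¹ ≤ gg k := by
  set x := |(k.1 : ℝ)| with hx
  set y := |(k.2 : ℝ)| with hy
  set m := latticeMag k with hm
  have hx0 : 0 ≤ x := abs_nonneg _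
  have hy0 : 0 ≤ y := abs_nonneg _
  have hm1 : 1 ≤ m := one_le_latticeMag hk
  have hm0 : 0 < m := lt_of_lt_of_le one_pos hm1
  have hxy1 : 1 ≤ x + y := by
    rcases ne_or_eq k.1 0 with h | h1
    · have : (1:ℝ) ≤ x := by rw [hx, ← Int.cast_abs]; exact_mod_cast Int.one_le_abs h
      linarith
    · have h2 : k.2 ≠ 0 := fun h2 => hk (Prod.ext h1 h2)
      have : (1:ℝ) ≤ y := by rw [hy, ← Int.cast_abs]; exact_mod_cast Int.one_le_abs h2
      linarith
  have hmsq : m ^ 2 = x ^ 2 + y ^ 2 := by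
    rw [hm, latticeMag_sq, hx, hy, _root_.sq_abs, _root_.sq_abs]
  have hP8 : (1 + x) * (1 + y) ≤ 8 * m ^ 2 := by
    rw [hmsq]
    nlinarith [sq_nonneg (x - y), sq_nonneg (x + y - 1), sq_nonneg (x + y)]
  -- raise to the power 3/2
  have hP0 : (0:ℝ) < (1 + x) * (1 + y) := by positivity
  have hkey : ((1 + x) * (1 + y)) ^ ((3:ℝ)/2) ≤ (8:ℝ) ^ ((3:ℝ)/2) * m ^ 3 := by
    calc ((1 + x) * (1 + y)) ^ ((3:ℝ)/2) ≤ (8 * m ^ 2) ^ ((3:ℝ)/2) :=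
          Real.rpow_le_rpow hP0.le hP8 (by norm_num)
      _ = (8:ℝ) ^ ((3:ℝ)/2) * (m ^ 2) ^ ((3:ℝ)/2) :=
          Real.mul_rpow (by norm_num) (by positivity)
      _ = (8:ℝ) ^ ((3:ℝ)/2) * m ^ 3 := by
          congr 1
          rw [← Real.rpow_natCast m 2, ← Real.rpow_mul hm0.le, ← Real.rpow_natCast m 3]
          norm_num
  have hgg : gg k = (8:ℝ) ^ ((3:ℝ)/2) * (((1 + x) * (1 + y)) ^ ((3:ℝ)/2))⁻¹ := by
    rw [gg, hfun, hfun, ← hx, ← hy]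
    congr 1
    rw [Real.mul_rpow (by positivity) (by positivity)]
    rw [Real.rpow_neg (by positivity), Real.rpow_neg (by positivity), mul_inv]
  rw [hgg]
  have hPpow : (0:ℝ) < ((1 + x) * (1 + y)) ^ ((3:ℝ)/2) := Real.rpow_pos_of_pos hP0 _
  have hm3 : (0:ℝ) < m ^ 3 := by positivity
  rw [show ((8:ℝ) ^ ((3:ℝ)/2) * (((1 + x) * (1 + y)) ^ ((3:ℝ)/2))⁻¹)
        = (8:ℝ) ^ ((3:ℝ)/2) / ((1 + x) * (1 + y)) ^ ((3:ℝ)/2) from (div_eq_mul_inv _ _).symm,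
     inv_eq_one_div, div_le_div_iff₀ hm3 hPpow, one_mul]
  exact hkey


set_option maxHeartbeats 2000000 in
/-- Brezis–Gallouët-type bound on the 2-torus via Fourier series:
if `‖∇v‖₂ ≤ 1` then `∑_{k≠0} |v̂_k| ≤ C (1 + (log max(‖Δv‖₂, 2))^{1/2})`,
with `‖∇v‖₂² = (2π)² ∑ |k|²|v̂_k|²` and `‖Δv‖₂² = (2π)² ∑ |k|⁴|v̂_k|²`. -/
theorem brezis_gallouet_fourier_bound :
    ∃ C : ℝ, 0 < C ∧ ∀ vh : ℤ × ℤ → ℂ, vh 0 = 0 →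
      (Summable fun k : ℤ × ℤ => latticeMag k ^ 2 * ‖vh k‖ ^ 2) →
      (Summable fun k : ℤ × ℤ => latticeMag k ^ 4 * ‖vh k‖ ^ 2) →
      (2 * π) * Real.sqrt (∑' k : ℤ × ℤ, latticeMag k ^ 2 * ‖vh k‖ ^ 2) ≤ 1 →
      ∑' k : ℤ × ℤ, ‖vh k‖ ≤
        C * (1 + Real.sqrt (Real.log
          (max ((2 * π) * Real.sqrt (∑' k : ℤ × ℤ, latticeMag k ^ 4 * ‖vh k‖ ^ 2)) 2))) := by
  classical
  set T := ∑' k, gg k with hTdef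
  have hT0 : 0 ≤ T := tsum_nonneg gg_nonneg
  have hpi : (0:ℝ) < 2 * π := by positivity
  have hC0 : 0 < (Real.sqrt 24 + Real.sqrt T) / (2 * π) :=
    div_pos (add_pos_of_pos_of_nonneg (Real.sqrt_pos.mpr (by norm_num)) (Real.sqrt_nonneg _)) hpi
  refine ⟨(Real.sqrt 24 + Real.sqrt T) / (2 * π), hC0, ?_⟩
  intro vh h0 hS2 hS4 hgrad
  set G := ∑' k : ℤ × ℤ, latticeMag k ^ 2 * ‖vh k‖ ^ 2 with hGdef
  set D := ∑' k : ℤ × ℤ, latticeMag k ^ 4 * ‖vh k‖ ^ 2 with hDdef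
  have hG0 : 0 ≤ G := by rw [hGdef]; exact tsum_nonneg (fun k => by positivity)
  have hD0 : 0 ≤ D := by rw [hDdef]; exact tsum_nonneg (fun k => by positivity)
  set Rm := max (2 * π * Real.sqrt D) 2 with hRmdef
  have hRm2 : (2:ℝ) ≤ Rm := le_max_right _ _
  have hRm0 : (0:ℝ) < Rm := by linarith
  have hsqD : Real.sqrt D ≤ Rm / (2 * π) := by
    rw [le_div_iff₀ hpi]
    calc Real.sqrt D * (2 * π) = 2 * π * Real.sqrt D := by ring
      _ ≤ Rm := le_max_left _ _
  have hsqG : Real.sqrt G ≤ 1 / (2 * π) := by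
    rw [le_div_iff₀ hpi]; linarith [hgrad]
  set N := ⌈Rm ^ 2⌉₊ with hNdef
  have hN1 : Rm ^ 2 ≤ (N:ℝ) := Nat.le_ceil _
  have hRm4 : (4:ℝ) ≤ Rm ^ 2 := by nlinarith
  have hN2 : (N:ℝ) ≤ 2 * Rm ^ 2 := by
    have h := Nat.ceil_lt_add_one (show (0:ℝ) ≤ Rm ^ 2 by positivity)
    rw [← hNdef] at h
    linarith
  have hNR : (1:ℝ) ≤ (N:ℝ) := by linarith
  have hNpos : 0 < N := by exact_mod_cast lt_of_lt_of_le zero_lt_one hNR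
  -- summability of the Fourier coefficients
  have hasum : Summable (fun k : ℤ × ℤ => ‖vh k‖) := by
    apply Summable.of_nonneg_of_le (fun k => norm_nonneg _)
      (fun k => ?_) ((gg_summable.add hS4).div_const 2)
    rcases eq_or_ne k 0 with rfl | hk
    · rw [h0]
      have h1 := gg_nonneg (0 : ℤ × ℤ)
      have h2 : (0:ℝ) ≤ latticeMag 0 ^ 4 * ‖(0:ℂ)‖ ^ 2 := by positivity
      simp only [norm_zero]
      linarith
    · have hm1 := one_le_latticeMag hk
      have hm0 : (0:ℝ) < latticeMag k := by linarith
      have h34 : (latticeMag k ^ 4)⁻¹ ≤ gg k := by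
        calc (latticeMag k ^ 4)⁻¹ ≤ (latticeMag k ^ 3)⁻¹ := by
              apply inv_anti₀ (by positivity)
              calc latticeMag k ^ 3 = latticeMag k ^ 3 * 1 := by ring
                _ ≤ latticeMag k ^ 3 * latticeMag k := by
                    apply mul_le_mul_of_nonneg_left hm1 (by positivity)
                _ = latticeMag k ^ 4 := by ring
          _ ≤ gg k := cube_bound hk
      have hid : ‖vh k‖ = (latticeMag k ^ 2)⁻¹ * (latticeMag k ^ 2 * ‖vh k‖) := by
        field_simp
      calc ‖vh k‖ = (latticeMag k ^ 2)⁻¹ * (latticeMag k ^ 2 * ‖vh k‖) := hid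
        _ ≤ (((latticeMag k ^ 2)⁻¹) ^ 2 + (latticeMag k ^ 2 * ‖vh k‖) ^ 2) / 2 := by
            nlinarith [sq_nonneg ((latticeMag k ^ 2)⁻¹ - latticeMag k ^ 2 * ‖vh k‖)]
        _ ≤ (gg k + latticeMag k ^ 4 * ‖vh k‖ ^ 2) / 2 := by
            have e1 : ((latticeMag k ^ 2)⁻¹) ^ 2 = (latticeMag k ^ 4)⁻¹ := by
              rw [← inv_pow, ← inv_pow, ← pow_mul]
            have e2 : (latticeMag k ^ 2 * ‖vh k‖) ^ 2 = latticeMag k ^ 4 * ‖vh k‖ ^ 2 := by ring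
            rw [e1, e2]
            linarith
  -- splitting of the sum
  set s : Set (ℤ × ℤ) := ((box N : Finset (ℤ × ℤ)) : Set (ℤ × ℤ)) with hsdef
  have hsplit : (∑' x : s, ‖vh x‖) + (∑' x : ↑sᶜ, ‖vh x‖) = ∑' k : ℤ × ℤ, ‖vh k‖ :=
    Summable.tsum_add_tsum_compl (hasum.subtype _) (hasum.subtype _)
  have hBsum : (∑' x : s, ‖vh x‖) = ∑ k ∈ box N, ‖vh k‖ := by
    rw [hsdef]
    exact Finset.tsum_subtype' (box N) (fun k => ‖vh k‖)
  -- the low-frequency bound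
  have hlow : ∑ k ∈ box N, ‖vh k‖ ≤ Real.sqrt (8 * harm N) * Real.sqrt G := by
    have hfg : ∀ k : ℤ × ℤ, ‖vh k‖ = Real.sqrt (Fq k) * (latticeMag k * ‖vh k‖) := by
      intro k
      rcases eq_or_ne k 0 with rfl | hk
      · rw [h0]; simp
      · rw [Fq, if_neg hk]
        have hm0 : (0:ℝ) < latticeMag k := lt_of_lt_of_le one_pos (one_le_latticeMag hk)
        rw [Real.sqrt_inv, Real.sqrt_sq hm0.le]
        field_simp
    calc ∑ k ∈ box N, ‖vh k‖
        = ∑ k ∈ box N, Real.sqrt (Fq k) * (latticeMag k * ‖vh k‖) :=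
          Finset.sum_congr rfl (fun k _ => hfg k)
      _ ≤ Real.sqrt (∑ k ∈ box N, Real.sqrt (Fq k) ^ 2) *
          Real.sqrt (∑ k ∈ box N, (latticeMag k * ‖vh k‖) ^ 2) :=
          Real.sum_mul_le_sqrt_mul_sqrt _ _ _
      _ ≤ _ := by
          apply mul_le_mul ?_ ?_ (Real.sqrt_nonneg _) (Real.sqrt_nonneg _)
          · apply Real.sqrt_le_sqrt
            calc ∑ k ∈ box N, Real.sqrt (Fq k) ^ 2 = ∑ k ∈ box N, Fq k :=
                  Finset.sum_congr rfl (fun k _ => Real.sq_sqrt (Fq_nonneg k))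
              _ ≤ 8 * harm N := sum_Fq_le N
          · apply Real.sqrt_le_sqrt
            calc ∑ k ∈ box N, (latticeMag k * ‖vh k‖) ^ 2
                = ∑ k ∈ box N, latticeMag k ^ 2 * ‖vh k‖ ^ 2 :=
                  Finset.sum_congr rfl (fun k _ => by ring)
              _ ≤ G := by rw [hGdef]; exact Summable.sum_le_tsum _ (fun k _ => by positivity) hS2
  -- properties of points outside the box
  have hout : ∀ p : ℤ × ℤ, p ∉ box N → Rm ^ 2 ≤ latticeMag p ∧ p ≠ 0 := by
    intro p hp
    rw [mem_box] at hp; push_neg at hp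
    have habs : (N:ℝ) + 1 ≤ latticeMag p := by
      rcases lt_or_ge ((N:ℤ)) |p.1| with h | h
      · calc ((N:ℝ) + 1) ≤ |(p.1:ℝ)| := by rw [← Int.cast_abs]; exact_mod_cast h
          _ ≤ _ := abs_fst_le p
      · have h2 : ((N:ℤ)) < |p.2| := hp h
        calc ((N:ℝ) + 1) ≤ |(p.2:ℝ)| := by rw [← Int.cast_abs]; exact_mod_cast h2
          _ ≤ _ := abs_snd_le p
    constructor
    · linarith
    · intro h; subst h
      have hz : latticeMag 0 = 0 := by simp [latticeMag]
      rw [hz] at habs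
      have : (0:ℝ) ≤ (N:ℝ) := Nat.cast_nonneg N
      linarith
  -- the high-frequency bound
  have hcompl_mem : ∀ x : ↑sᶜ, (x : ℤ × ℤ) ∉ box N := by
    intro x
    have h := x.2
    exact fun hmem => h (Finset.mem_coe.mpr hmem)
  have hkey : ∀ x : ↑sᶜ, Rm ^ 2 ≤ latticeMag (x : ℤ × ℤ) ∧ (x : ℤ × ℤ) ≠ 0 :=
    fun x => hout _ (hcompl_mem x)
  have hmx : ∀ x : ↑sᶜ, (0:ℝ) < latticeMag (x : ℤ × ℤ) := by
    intro x; have := (hkey x).1; nlinarith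
  have hf2 : ∀ x : ↑sᶜ, ((latticeMag (x : ℤ × ℤ) ^ 2)⁻¹) ^ 2 ≤ (Rm ^ 2)⁻¹ * gg (x : ℤ × ℤ) := by
    intro x
    obtain ⟨hR, hne⟩ := hkey x
    have hm0 := hmx x
    have e : ((latticeMag (x : ℤ × ℤ) ^ 2)⁻¹) ^ 2
        = (latticeMag (x : ℤ × ℤ))⁻¹ * (latticeMag (x : ℤ × ℤ) ^ 3)⁻¹ := by
      field_simp
    rw [e]
    exact mul_le_mul (inv_anti₀ (by positivity) hR) (cube_bound hne) (by positivity)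
      (by positivity)
  have hf2sum : Summable (fun x : ↑sᶜ => ((latticeMag (x : ℤ × ℤ) ^ 2)⁻¹) ^ 2) := by
    apply Summable.of_nonneg_of_le (fun x => sq_nonneg _) hf2
    exact (gg_summable.subtype _).mul_left _
  have hg2sum : Summable (fun x : ↑sᶜ => (latticeMag (x : ℤ × ℤ) ^ 2 * ‖vh (x : ℤ × ℤ)‖) ^ 2) := by
    apply Summable.congr (hS4.subtype sᶜ)
    intro x
    simp only [Function.comp_apply]
    ring
  have hggT : (∑' x : ↑sᶜ, gg (x : ℤ × ℤ)) ≤ T := by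
    have h := Summable.tsum_add_tsum_compl (s := s) (gg_summable.subtype _) (gg_summable.subtype _)
    have h2 : 0 ≤ ∑' x : s, gg (x : ℤ × ℤ) := tsum_nonneg (fun x => gg_nonneg _)
    rw [hTdef]
    linarith [h.le]
  have hg2D : (∑' x : ↑sᶜ, (latticeMag (x : ℤ × ℤ) ^ 2 * ‖vh (x : ℤ × ℤ)‖) ^ 2) ≤ D := by
    have h := Summable.tsum_add_tsum_compl (s := s) (hS4.subtype _) (hS4.subtype _)
    have h2 : 0 ≤ ∑' x : s, latticeMag (x : ℤ × ℤ) ^ 4 * ‖vh (x : ℤ × ℤ)‖ ^ 2 :=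
      tsum_nonneg (fun x => by positivity)
    have h3 : (∑' x : ↑sᶜ, (latticeMag (x : ℤ × ℤ) ^ 2 * ‖vh (x : ℤ × ℤ)‖) ^ 2)
        = ∑' x : ↑sᶜ, latticeMag (x : ℤ × ℤ) ^ 4 * ‖vh (x : ℤ × ℤ)‖ ^ 2 :=
      tsum_congr (fun x => by ring)
    rw [hDdef, h3]
    linarith [h.le]
  have hf2T : (∑' x : ↑sᶜ, ((latticeMag (x : ℤ × ℤ) ^ 2)⁻¹) ^ 2) ≤ (Rm ^ 2)⁻¹ * T :=
    calc (∑' x : ↑sᶜ, ((latticeMag (x : ℤ × ℤ) ^ 2)⁻¹) ^ 2)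
        ≤ ∑' x : ↑sᶜ, (Rm ^ 2)⁻¹ * gg (x : ℤ × ℤ) :=
          Summable.tsum_le_tsum hf2 hf2sum ((gg_summable.subtype _).mul_left _)
      _ = (Rm ^ 2)⁻¹ * ∑' x : ↑sᶜ, gg (x : ℤ × ℤ) := tsum_mul_left
      _ ≤ (Rm ^ 2)⁻¹ * T := mul_le_mul_of_nonneg_left hggT (by positivity)
  have hhigh : (∑' x : ↑sᶜ, ‖vh x‖) ≤ Real.sqrt T / (2 * π) := by
    have hfg : ∀ x : ↑sᶜ, ‖vh (x : ℤ × ℤ)‖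
        = (latticeMag (x : ℤ × ℤ) ^ 2)⁻¹ * (latticeMag (x : ℤ × ℤ) ^ 2 * ‖vh (x : ℤ × ℤ)‖) := by
      intro x
      have := hmx x
      field_simp
    calc (∑' x : ↑sᶜ, ‖vh x‖)
        = ∑' x : ↑sᶜ, (latticeMag (x : ℤ × ℤ) ^ 2)⁻¹
            * (latticeMag (x : ℤ × ℤ) ^ 2 * ‖vh (x : ℤ × ℤ)‖) := tsum_congr hfg
      _ ≤ Real.sqrt (∑' x : ↑sᶜ, ((latticeMag (x : ℤ × ℤ) ^ 2)⁻¹) ^ 2)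
            * Real.sqrt (∑' x : ↑sᶜ, (latticeMag (x : ℤ × ℤ) ^ 2 * ‖vh (x : ℤ × ℤ)‖) ^ 2) :=
          tsum_mul_le_sqrt _ _ (fun x => by positivity) (fun x => by positivity) hf2sum hg2sum
      _ ≤ Real.sqrt ((Rm ^ 2)⁻¹ * T) * Real.sqrt D :=
          mul_le_mul (Real.sqrt_le_sqrt hf2T) (Real.sqrt_le_sqrt hg2D)
            (Real.sqrt_nonneg _) (Real.sqrt_nonneg _)
      _ = Real.sqrt T / Rm * Real.sqrt D := by
          rw [Real.sqrt_mul (by positivity) T, Real.sqrt_inv, Real.sqrt_sq hRm0.le]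
          ring
      _ ≤ Real.sqrt T / Rm * (Rm / (2 * π)) :=
          mul_le_mul_of_nonneg_left hsqD (by positivity)
      _ = Real.sqrt T / (2 * π) := by
          field_simp
  -- logarithm estimates
  set L := Real.log Rm with hLdef
  have hL0 : 0 ≤ L := Real.log_nonneg (by linarith)
  have hlog2 : Real.log 2 ≤ L := Real.log_le_log (by norm_num) hRm2
  have hNpos' : (0:ℝ) < (N:ℝ) := by exact_mod_cast hNpos
  have hlogN : Real.log N ≤ 3 * L := by
    calc Real.log N ≤ Real.log (2 * Rm ^ 2) := Real.log_le_log hNpos' hN2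
      _ = Real.log 2 + 2 * L := by
          rw [Real.log_mul (by norm_num) (by positivity), Real.log_pow]
          push_cast
          ring
      _ ≤ 3 * L := by linarith
  have hharm : harm N ≤ 1 + 3 * L := le_trans (harm_le N) (by linarith)
  have h1L : Real.sqrt (1 + L) ≤ 1 + Real.sqrt L := by
    have h2 : Real.sqrt (1 + L) ≤ Real.sqrt ((1 + Real.sqrt L) ^ 2) :=
      Real.sqrt_le_sqrt (by nlinarith [Real.sq_sqrt hL0, Real.sqrt_nonneg L])
    rwa [Real.sqrt_sq (by positivity)] at h2
  have hsq24 : Real.sqrt (8 * harm N) ≤ Real.sqrt 24 * (1 + Real.sqrt L) := by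
    calc Real.sqrt (8 * harm N) ≤ Real.sqrt (24 * (1 + L)) :=
          Real.sqrt_le_sqrt (by nlinarith)
      _ = Real.sqrt 24 * Real.sqrt (1 + L) := Real.sqrt_mul (by norm_num) _
      _ ≤ Real.sqrt 24 * (1 + Real.sqrt L) :=
          mul_le_mul_of_nonneg_left h1L (Real.sqrt_nonneg _)
  rw [← hsplit, hBsum]
  calc (∑ k ∈ box N, ‖vh k‖) + (∑' x : ↑sᶜ, ‖vh x‖)
      ≤ Real.sqrt (8 * harm N) * Real.sqrt G + Real.sqrt T / (2 * π) := add_le_add hlow hhigh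
    _ ≤ Real.sqrt 24 * (1 + Real.sqrt L) * (1 / (2 * π)) + Real.sqrt T / (2 * π) := by
        refine add_le_add ?_ le_rfl
        exact mul_le_mul hsq24 hsqG (Real.sqrt_nonneg _) (by positivity)
    _ ≤ (Real.sqrt 24 + Real.sqrt T) / (2 * π) * (1 + Real.sqrt L) := by
        have h1 : 0 ≤ Real.sqrt L := Real.sqrt_nonneg _
        have h2 : 0 ≤ Real.sqrt T := Real.sqrt_nonneg _
        have h3 : (0:ℝ) < (2 * π)⁻¹ := by positivity
        rw [div_eq_mul_inv, div_eq_mul_inv, div_eq_mul_inv]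
        nlinarith [mul_nonneg (mul_nonneg h2 h1) h3.le]
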